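/- Let f : ℂ → ℂ be holomorphic and define m : ℝ² → ℝ³ by m(x,y) = (2 Re f(ζ), 2 Im f(ζ), 1 − |f(ζ)|²)/(1 + |f(ζ)|²) with ζ = x + iy. Then |m(x,y)| = 1 for all (x,y), and m is a harmonic map into S², i.e. Δm + |∇m|² m = 0. -/

import Mathlib

set_option maxHeartbeats 2000000
noncomputable section
open Complex

/-- planar Laplacian of a function on ℝ² -/
def lap (g : ℝ × ℝ → ℝ) (p : ℝ × ℝ) : ℝ :=
  fderiv ℝ (fun q => fderiv ℝ g q (1, 0)) p (1, 0)
    + fderiv ℝ (fun q => fderiv ℝ g q (0, 1)) p (0, 1)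

/-- squared gradient of a function on ℝ² -/
def gradSq (g : ℝ × ℝ → ℝ) (p : ℝ × ℝ) : ℝ :=
  (fderiv ℝ g p (1, 0)) ^ 2 + (fderiv ℝ g p (0, 1)) ^ 2

/-- m = (2 Re f, 2 Im f, 1 − |f|²)/(1 + |f|²) with ζ = x + iy -/
def mf (f : ℂ → ℂ) (p : ℝ × ℝ) : Fin 3 → ℝ :=
  ![2 * (f (p.1 + p.2 * I)).re / (1 + ‖f (p.1 + p.2 * I)‖ ^ 2),
    2 * (f (p.1 + p.2 * I)).im / (1 + ‖f (p.1 + p.2 * I)‖ ^ 2),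
    (1 - ‖f (p.1 + p.2 * I)‖ ^ 2) / (1 + ‖f (p.1 + p.2 * I)‖ ^ 2)]


def D2 (x y : ℝ) : ℝ × ℝ →L[ℝ] ℝ :=
  x • (ContinuousLinearMap.fst ℝ ℝ ℝ) + y • (ContinuousLinearMap.snd ℝ ℝ ℝ)

@[simp] theorem D2_apply (x y : ℝ) (e : ℝ × ℝ) : D2 x y e = x * e.1 + y * e.2 := by
  simp [D2]

abbrev PDAt (g : ℝ × ℝ → ℝ) (gx gy : ℝ) (p : ℝ × ℝ) : Prop :=
  HasFDerivAt g (D2 gx gy) p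

theorem toD2 {g : ℝ × ℝ → ℝ} {L : ℝ × ℝ →L[ℝ] ℝ} {p : ℝ × ℝ} {x y : ℝ}
    (h : HasFDerivAt g L p) (hx : L (1, 0) = x) (hy : L (0, 1) = y) : PDAt g x y p := by
  have hL : L = D2 x y := by
    apply ContinuousLinearMap.ext
    rintro ⟨ex, ey⟩
    have he : ((ex, ey) : ℝ × ℝ) = ex • ((1:ℝ), (0:ℝ)) + ey • ((0:ℝ), (1:ℝ)) := by
      simp [Prod.ext_iff]
    rw [he]
    simp only [map_add, map_smul, hx, hy, D2_apply, smul_eq_mul]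
    ring
  show HasFDerivAt g (D2 x y) p
  rw [← hL]; exact h

namespace PDAt

variable {g h : ℝ × ℝ → ℝ} {gx gy hx hy x' y' : ℝ} {p : ℝ × ℝ}

theorem fd1 (hg : PDAt g gx gy p) : fderiv ℝ g p (1, 0) = gx := by
  rw [HasFDerivAt.fderiv hg]; simp

theorem fd2 (hg : PDAt g gx gy p) : fderiv ℝ g p (0, 1) = gy := by
  rw [HasFDerivAt.fderiv hg]; simp

theorem congr (hg : PDAt g gx gy p) (h1 : gx = x') (h2 : gy = y') : PDAt g x' y' p := by
  rw [← h1, ← h2]; exact hg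

protected theorem add (h₁ : PDAt g gx gy p) (h₂ : PDAt h hx hy p) :
    PDAt (fun q => g q + h q) (gx + hx) (gy + hy) p :=
  toD2 (HasFDerivAt.add h₁ h₂) (by simp) (by simp)

protected theorem sub (h₁ : PDAt g gx gy p) (h₂ : PDAt h hx hy p) :
    PDAt (fun q => g q - h q) (gx - hx) (gy - hy) p :=
  toD2 (HasFDerivAt.sub h₁ h₂) (by simp) (by simp)

protected theorem neg (h₁ : PDAt g gx gy p) :
    PDAt (fun q => -(g q)) (-gx) (-gy) p :=
  toD2 (HasFDerivAt.neg h₁) (by simp) (by simp)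

protected theorem const (c : ℝ) (p : ℝ × ℝ) : PDAt (fun _ => c) 0 0 p :=
  toD2 (hasFDerivAt_const c p) (by simp) (by simp)

protected theorem mul (h₁ : PDAt g gx gy p) (h₂ : PDAt h hx hy p) :
    PDAt (fun q => g q * h q) (g p * hx + h p * gx) (g p * hy + h p * gy) p :=
  toD2 (HasFDerivAt.mul h₁ h₂) (by simp) (by simp)

theorem const_mul (h₁ : PDAt g gx gy p) (c : ℝ) :
    PDAt (fun q => c * g q) (c * gx) (c * gy) p := by
  have := (PDAt.const c p).mul h₁
  simpa using this

protected theorem inv (h₁ : PDAt g gx gy p) (hne : g p ≠ 0) :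
    PDAt (fun q => (g q)⁻¹) (-gx / (g p * g p)) (-gy / (g p * g p)) p := by
  have h := (hasDerivAt_inv hne).comp_hasFDerivAt p h₁
  refine toD2 h ?_ ?_ <;>
    · simp only [ContinuousLinearMap.coe_smul', Pi.smul_apply, D2_apply, smul_eq_mul, pow_two]
      rw [eq_div_iff (mul_ne_zero hne hne)]
      field_simp
      ring

protected theorem div (h₁ : PDAt g gx gy p) (h₂ : PDAt h hx hy p) (hne : h p ≠ 0) :
    PDAt (fun q => g q / h q) ((gx * h p - g p * hx) / (h p * h p))
      ((gy * h p - g p * hy) / (h p * h p)) p := by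
  have hfun : (fun q => g q / h q) = fun q => g q * (h q)⁻¹ := by
    funext q; rw [div_eq_mul_inv]
  rw [hfun]
  exact (h₁.mul (h₂.inv hne)).congr (by field_simp; try ring) (by field_simp; try ring)

end PDAt

def CL : ℝ × ℝ →L[ℝ] ℂ :=
  Complex.ofRealCLM.comp (ContinuousLinearMap.fst ℝ ℝ ℝ) +
    (ContinuousLinearMap.snd ℝ ℝ ℝ).smulRight I

theorem CL_apply (e : ℝ × ℝ) : CL e = (e.1 : ℂ) + e.2 • I := by
  simp [CL]

theorem hasFDerivAt_zeta (p : ℝ × ℝ) :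
    HasFDerivAt (fun q : ℝ × ℝ => (q.1 : ℂ) + q.2 * I) CL p := by
  have h := CL.hasFDerivAt (x := p)
  have hfun : (fun q : ℝ × ℝ => (q.1 : ℂ) + q.2 * I) = ⇑CL := by
    funext q; rw [CL_apply, Complex.real_smul]
  rw [hfun]; exact h

theorem key (g : ℂ → ℂ) (hg : Differentiable ℂ g) (p : ℝ × ℝ) :
    HasFDerivAt (fun q : ℝ × ℝ => g ((q.1 : ℂ) + q.2 * I))
      ((deriv g ((p.1 : ℂ) + p.2 * I)) • CL) p := by
  have hd : HasDerivAt g (deriv g ((p.1 : ℂ) + p.2 * I)) ((p.1 : ℂ) + p.2 * I) :=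
    (hg _).hasDerivAt
  exact hd.comp_hasFDerivAt p (hasFDerivAt_zeta p)

def uu (f : ℂ → ℂ) (q : ℝ × ℝ) : ℝ := (f ((q.1 : ℂ) + q.2 * I)).re
def vv (f : ℂ → ℂ) (q : ℝ × ℝ) : ℝ := (f ((q.1 : ℂ) + q.2 * I)).im

theorem PD_uu {f : ℂ → ℂ} (hf : Differentiable ℂ f) (p : ℝ × ℝ) :
    PDAt (uu f) (uu (deriv f) p) (-(vv (deriv f) p)) p := by
  have h2 := (Complex.reCLM.hasFDerivAt (x := f ((p.1 : ℂ) + p.2 * I))).comp p (key f hf p)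
  refine toD2 h2 ?_ ?_ <;>
    simp [CL_apply, uu, vv, Complex.mul_re, Complex.real_smul]

theorem PD_vv {f : ℂ → ℂ} (hf : Differentiable ℂ f) (p : ℝ × ℝ) :
    PDAt (vv f) (vv (deriv f) p) (uu (deriv f) p) p := by
  have h2 := (Complex.imCLM.hasFDerivAt (x := f ((p.1 : ℂ) + p.2 * I))).comp p (key f hf p)
  refine toD2 h2 ?_ ?_ <;>
    simp [CL_apply, uu, vv, Complex.mul_im, Complex.real_smul]

theorem diff_deriv {g : ℂ → ℂ} (hg : Differentiable ℂ g) : Differentiable ℂ (deriv g) := by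
  have h1 : Differentiable ℂ (fderiv ℂ g) := fun z => ((hg.analyticAt z).fderiv).differentiableAt
  have h2 : deriv g = fun z => fderiv ℂ g z 1 := funext fun z => rfl
  rw [h2]
  exact fun z => (h1 z).clm_apply (differentiableAt_const 1)

def NN (f : ℂ → ℂ) (q : ℝ × ℝ) : ℝ := 1 + (uu f q * uu f q + vv f q * vv f q)

def NX (f : ℂ → ℂ) (q : ℝ × ℝ) : ℝ :=
  2 * uu f q * uu (deriv f) q + 2 * vv f q * vv (deriv f) q
def NY (f : ℂ → ℂ) (q : ℝ × ℝ) : ℝ :=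
  2 * vv f q * uu (deriv f) q - 2 * uu f q * vv (deriv f) q

theorem NN_ne (f : ℂ → ℂ) (q : ℝ × ℝ) : NN f q ≠ 0 := by
  have h1 := mul_self_nonneg (uu f q)
  have h2 := mul_self_nonneg (vv f q)
  unfold NN; nlinarith

theorem PD_NN {f : ℂ → ℂ} (hf : Differentiable ℂ f) (p : ℝ × ℝ) :
    PDAt (NN f) (NX f p) (NY f p) p := by
  have h := (PDAt.const 1 p).add
    (((PD_uu hf p).mul (PD_uu hf p)).add ((PD_vv hf p).mul (PD_vv hf p)))
  exact h.congr (by simp only [NX]; try ring) (by simp only [NY]; try ring)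

def M1 (f : ℂ → ℂ) (q : ℝ × ℝ) : ℝ := 2 * uu f q / NN f q
def M2 (f : ℂ → ℂ) (q : ℝ × ℝ) : ℝ := 2 * vv f q / NN f q
def M3 (f : ℂ → ℂ) (q : ℝ × ℝ) : ℝ :=
  (1 - (uu f q * uu f q + vv f q * vv f q)) / NN f q

def X1 (f : ℂ → ℂ) (q : ℝ × ℝ) : ℝ :=
  (2 * uu (deriv f) q * NN f q - 2 * uu f q * NX f q) / (NN f q * NN f q)
def Y1 (f : ℂ → ℂ) (q : ℝ × ℝ) : ℝ :=
  (-(2 * vv (deriv f) q) * NN f q - 2 * uu f q * NY f q) / (NN f q * NN f q)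
def X2 (f : ℂ → ℂ) (q : ℝ × ℝ) : ℝ :=
  (2 * vv (deriv f) q * NN f q - 2 * vv f q * NX f q) / (NN f q * NN f q)
def Y2 (f : ℂ → ℂ) (q : ℝ × ℝ) : ℝ :=
  (2 * uu (deriv f) q * NN f q - 2 * vv f q * NY f q) / (NN f q * NN f q)
def X3 (f : ℂ → ℂ) (q : ℝ × ℝ) : ℝ :=
  (-(NX f q) * NN f q - (1 - (uu f q * uu f q + vv f q * vv f q)) * NX f q) / (NN f q * NN f q)
def Y3 (f : ℂ → ℂ) (q : ℝ × ℝ) : ℝ :=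
  (-(NY f q) * NN f q - (1 - (uu f q * uu f q + vv f q * vv f q)) * NY f q) / (NN f q * NN f q)

theorem PD_M1 {f : ℂ → ℂ} (hf : Differentiable ℂ f) (p : ℝ × ℝ) :
    PDAt (M1 f) (X1 f p) (Y1 f p) p := by
  have h := ((PD_uu hf p).const_mul 2).div (PD_NN hf p) (NN_ne f p)
  exact h.congr (by simp only [X1]; try ring) (by simp only [Y1]; try ring)

theorem PD_M2 {f : ℂ → ℂ} (hf : Differentiable ℂ f) (p : ℝ × ℝ) :
    PDAt (M2 f) (X2 f p) (Y2 f p) p := by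
  have h := ((PD_vv hf p).const_mul 2).div (PD_NN hf p) (NN_ne f p)
  exact h.congr (by simp only [X2]; try ring) (by simp only [Y2]; try ring)

theorem PD_M3 {f : ℂ → ℂ} (hf : Differentiable ℂ f) (p : ℝ × ℝ) :
    PDAt (M3 f) (X3 f p) (Y3 f p) p := by
  have hnum := (PDAt.const 1 p).sub
    (((PD_uu hf p).mul (PD_uu hf p)).add ((PD_vv hf p).mul (PD_vv hf p)))
  have h := hnum.div (PD_NN hf p) (NN_ne f p)
  exact h.congr (by simp only [X3, NX]; try ring) (by simp only [Y3, NY]; try ring)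

theorem lap_eq {g X Y : ℝ × ℝ → ℝ} {p : ℝ × ℝ} {XX XY YX YY : ℝ}
    (hg : ∀ q, PDAt g (X q) (Y q) q)
    (hX : PDAt X XX XY p) (hY : PDAt Y YX YY p) :
    lap g p = XX + YY := by
  have e1 : (fun q => fderiv ℝ g q (1, 0)) = X := funext fun q => (hg q).fd1
  have e2 : (fun q => fderiv ℝ g q (0, 1)) = Y := funext fun q => (hg q).fd2
  unfold lap
  rw [e1, e2, hX.fd1, hY.fd2]

theorem gradSq_eq {g X Y : ℝ × ℝ → ℝ} (hg : ∀ q, PDAt g (X q) (Y q) q) (p : ℝ × ℝ) :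
    gradSq g p = X p ^ 2 + Y p ^ 2 := by
  unfold gradSq
  rw [(hg p).fd1, (hg p).fd2]


theorem holomorphic_gives_harmonic_map (f : ℂ → ℂ) (hf : Differentiable ℂ f) :
    (∀ p : ℝ × ℝ, ∑ i, (mf f p i) ^ 2 = 1)
    ∧ (∀ p : ℝ × ℝ, ∀ i : Fin 3,
        lap (fun q => mf f q i) p
          + (∑ j, gradSq (fun q => mf f q j) p) * mf f p i = 0) := by
  have hf' : Differentiable ℂ (deriv f) := diff_deriv hf
  constructor
  · intro p
    have hne2 : (1 : ℝ) + ((f (↑p.1 + ↑p.2 * I)).re * (f (↑p.1 + ↑p.2 * I)).re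
        + (f (↑p.1 + ↑p.2 * I)).im * (f (↑p.1 + ↑p.2 * I)).im) ≠ 0 := NN_ne f p
    simp only [mf, Fin.sum_univ_three, Matrix.cons_val_zero, Matrix.cons_val_one,
      Matrix.head_cons, Matrix.cons_val_two, Matrix.tail_cons, Complex.sq_norm,
      Complex.normSq_apply]
    field_simp
    ring
  · intro p i
    have c0 : (fun q : ℝ × ℝ => mf f q 0) = M1 f := by
      funext q
      simp only [mf, Matrix.cons_val_zero, M1, NN, uu, vv, Complex.sq_norm, Complex.normSq_apply]
    have c1 : (fun q : ℝ × ℝ => mf f q 1) = M2 f := by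
      funext q
      simp only [mf, Matrix.cons_val_one, Matrix.head_cons, Matrix.cons_val_zero, M2, NN, uu, vv, Complex.sq_norm,
        Complex.normSq_apply]
    have c2 : (fun q : ℝ × ℝ => mf f q 2) = M3 f := by
      funext q
      simp only [mf, Matrix.cons_val_two, Matrix.tail_cons, Matrix.head_cons, M3, NN, uu, vv,
        Complex.sq_norm, Complex.normSq_apply]
    have v0 : mf f p 0 = M1 f p := congrFun c0 p
    have v1 : mf f p 1 = M2 f p := congrFun c1 p
    have v2 : mf f p 2 = M3 f p := congrFun c2 p
    have pdu := PD_uu hf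
    have pdv := PD_vv hf
    have pdu' := PD_uu hf'
    have pdv' := PD_vv hf'
    have pdN := PD_NN hf
    have pdM1 := PD_M1 hf
    have pdM2 := PD_M2 hf
    have pdM3 := PD_M3 hf
    have pdNX := fun q =>
      (((pdu q).const_mul 2).mul (pdu' q)).add (((pdv q).const_mul 2).mul (pdv' q))
    have pdNY := fun q =>
      (((pdv q).const_mul 2).mul (pdu' q)).sub (((pdu q).const_mul 2).mul (pdv' q))
    have pdN2 := fun q => (pdN q).mul (pdN q)
    have hden : NN f p * NN f p ≠ 0 := mul_ne_zero (NN_ne f p) (NN_ne f p)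
    have hQ := fun q =>
      (PDAt.const 1 q).sub (((pdu q).mul (pdu q)).add ((pdv q).mul (pdv q)))
    have hX1 : PDAt (X1 f) _ _ p :=
      ((((pdu' p).const_mul 2).mul (pdN p)).sub
        (((pdu p).const_mul 2).mul (pdNX p))).div (pdN2 p) hden
    have hY1 : PDAt (Y1 f) _ _ p :=
      (((((pdv' p).const_mul 2).neg).mul (pdN p)).sub
        (((pdu p).const_mul 2).mul (pdNY p))).div (pdN2 p) hden
    have hX2 : PDAt (X2 f) _ _ p :=
      ((((pdv' p).const_mul 2).mul (pdN p)).sub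
        (((pdv p).const_mul 2).mul (pdNX p))).div (pdN2 p) hden
    have hY2 : PDAt (Y2 f) _ _ p :=
      ((((pdu' p).const_mul 2).mul (pdN p)).sub
        (((pdv p).const_mul 2).mul (pdNY p))).div (pdN2 p) hden
    have hX3 : PDAt (X3 f) _ _ p :=
      (((pdNX p).neg.mul (pdN p)).sub ((hQ p).mul (pdNX p))).div (pdN2 p) hden
    have hY3 : PDAt (Y3 f) _ _ p :=
      (((pdNY p).neg.mul (pdN p)).sub ((hQ p).mul (pdNY p))).div (pdN2 p) hden
    have L1 := lap_eq pdM1 hX1 hY1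
    have L2 := lap_eq pdM2 hX2 hY2
    have L3 := lap_eq pdM3 hX3 hY3
    have G1 := gradSq_eq pdM1 p
    have G2 := gradSq_eq pdM2 p
    have G3 := gradSq_eq pdM3 p
    have hne' : (1 : ℝ) + (uu f p * uu f p + vv f p * vv f p) ≠ 0 := NN_ne f p
    fin_cases i
    · show lap (fun q => mf f q 0) p + (∑ j, gradSq (fun q => mf f q j) p) * mf f p 0 = 0
      simp only [Fin.sum_univ_three, c0, c1, c2]
      rw [L1, G1, G2, G3, v0]
      simp only [X1, Y1, X2, Y2, X3, Y3, NX, NY, M1, M2, M3, NN]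
      field_simp
      ring
    · show lap (fun q => mf f q 1) p + (∑ j, gradSq (fun q => mf f q j) p) * mf f p 1 = 0
      simp only [Fin.sum_univ_three, c0, c1, c2]
      rw [L2, G1, G2, G3, v1]
      simp only [X1, Y1, X2, Y2, X3, Y3, NX, NY, M1, M2, M3, NN]
      field_simp
      ring
    · show lap (fun q => mf f q 2) p + (∑ j, gradSq (fun q => mf f q j) p) * mf f p 2 = 0
      simp only [Fin.sum_univ_three, c0, c1, c2]
      rw [L3, G1, G2, G3, v2]
      simp only [X1, Y1, X2, Y2, X3, Y3, NX, NY, M1, M2, M3, NN]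
      field_simp
      ring
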